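/- For A ∈ S^{3×3} let q_A : ℝ^{3×3} → ℝ be the quadratic form q_A(F) = A : cof(F^a), where F^a = (F−Fᵀ)/2. Then the following three conditions are equivalent: (i) q_A is convex; (ii) q_A is rank-one convex, i.e., for every F ∈ ℝ^{3×3} and all a, b ∈ ℝ³ the map t ↦ q_A(F + t·a⊗b) is convex; (iii) A is positive semi-definite. -/

import Mathlib

open Matrix

/-- The antisymmetric part `(F − Fᵀ)/2` of a 3×3 matrix. -/
noncomputable def antiPart (F : Matrix (Fin 3) (Fin 3) ℝ) : Matrix (Fin 3) (Fin 3) ℝ :=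
  (1 / 2 : ℝ) • (F - Fᵀ)

/-- The cofactor matrix: `(cof F)_{ij} = (-1)^{i+j}` times the determinant of the 2×2
matrix obtained from `F` by deleting row `i` and column `j`. -/
noncomputable def cof (F : Matrix (Fin 3) (Fin 3) ℝ) : Matrix (Fin 3) (Fin 3) ℝ :=
  Matrix.of fun i j =>
    (-1 : ℝ) ^ ((i : ℕ) + (j : ℕ)) * (F.submatrix i.succAbove j.succAbove).det

/-- Frobenius inner product `A:B = Σ_{i,j} A_{ij} B_{ij}` of 3×3 matrices. -/
def mdot (A B : Matrix (Fin 3) (Fin 3) ℝ) : ℝ := ∑ i, ∑ j, A i j * B i j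

/-- `A ∈ S^{3×3}` is positive semi-definite: `Ax·x ≥ 0` for all `x ∈ ℝ³`. -/
def PosSemidefM (A : Matrix (Fin 3) (Fin 3) ℝ) : Prop :=
  ∀ x : Fin 3 → ℝ, 0 ≤ A.mulVec x ⬝ᵥ x

/-- The quadratic form `q_A(F) = A : cof (Fᵃ)`. -/
noncomputable def qA (A : Matrix (Fin 3) (Fin 3) ℝ) (F : Matrix (Fin 3) (Fin 3) ℝ) : ℝ :=
  mdot A (cof (antiPart F))

/-- `W : ℝ^{3×3} → ℝ` is rank-one convex if it is convex along all rank-one lines. -/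
def RankOneConvex3 (W : Matrix (Fin 3) (Fin 3) ℝ → ℝ) : Prop :=
  ∀ (F : Matrix (Fin 3) (Fin 3) ℝ) (a b : Fin 3 → ℝ),
    ConvexOn ℝ Set.univ (fun t : ℝ => W (F + t • vecMulVec a b))

/- auxiliary -/
noncomputable def wv (F : Matrix (Fin 3) (Fin 3) ℝ) : Fin 3 → ℝ :=
  ![(F 2 1 - F 1 2)/2, (F 0 2 - F 2 0)/2, (F 1 0 - F 0 1)/2]

noncomputable def Qf (A : Matrix (Fin 3) (Fin 3) ℝ) (u : Fin 3 → ℝ) : ℝ := A.mulVec u ⬝ᵥ u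

lemma qA_eq (A F : Matrix (Fin 3) (Fin 3) ℝ) : qA A F = Qf A (wv F) := by
  simp [qA, Qf, mdot, cof, antiPart, wv, mulVec, dotProduct, Fin.sum_univ_three,
    Matrix.det_fin_two, Matrix.submatrix_apply, Fin.succAbove, Fin.lt_def, transpose_apply, -Fin.val_pos_iff]
  ring

lemma Qf_smul (A : Matrix (Fin 3) (Fin 3) ℝ) (c : ℝ) (u : Fin 3 → ℝ) :
    Qf A (c • u) = c^2 * Qf A u := by
  simp [Qf, mulVec, dotProduct, Fin.sum_univ_three]; ring

lemma wv_smul (c : ℝ) (R : Matrix (Fin 3) (Fin 3) ℝ) : wv (c • R) = c • wv R := by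
  funext i; fin_cases i <;> simp [wv] <;> ring

lemma qA_smul (A : Matrix (Fin 3) (Fin 3) ℝ) (c : ℝ) (R : Matrix (Fin 3) (Fin 3) ℝ) :
    qA A (c • R) = c^2 * qA A R := by
  rw [qA_eq, wv_smul, Qf_smul, qA_eq]

lemma key_identity (A : Matrix (Fin 3) (Fin 3) ℝ) (u v : Fin 3 → ℝ) (s t : ℝ) (hst : s + t = 1) :
    Qf A (fun i => s * u i + t * v i) = s * Qf A u + t * Qf A v - s * t * Qf A (u - v) := by
  have ht : t = 1 - s := by linarith
  subst ht
  simp [Qf, mulVec, dotProduct, Fin.sum_univ_three, Pi.sub_apply]; ring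

lemma psd_to_conv (A : Matrix (Fin 3) (Fin 3) ℝ) (h : PosSemidefM A) :
    ConvexOn ℝ Set.univ (qA A) := by
  refine ⟨convex_univ, ?_⟩
  intro F _ G _ s t hs ht hst
  simp only [qA_eq, smul_eq_mul]
  have hw : wv (s • F + t • G) = fun i => s * wv F i + t * wv G i := by
    funext i; fin_cases i <;> simp [wv] <;> ring
  rw [hw, key_identity A _ _ s t hst]
  have h0 : 0 ≤ Qf A (wv F - wv G) := h _
  nlinarith [mul_nonneg hs ht]

lemma conv_to_r1 (A : Matrix (Fin 3) (Fin 3) ℝ) (h : ConvexOn ℝ Set.univ (qA A)) :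
    RankOneConvex3 (qA A) := by
  intro F a b
  refine ⟨convex_univ, ?_⟩
  intro p _ q _ s t hs ht hst
  simp only [smul_eq_mul]
  have key : F + (s * p + t * q) • vecMulVec a b
      = s • (F + p • vecMulVec a b) + t • (F + q • vecMulVec a b) := by
    have hF : s • F + t • F = F := by rw [← add_smul, hst, one_smul]
    rw [smul_add, smul_add, add_add_add_comm, hF, smul_smul, smul_smul, ← add_smul]
  rw [key]
  exact h.2 (Set.mem_univ _) (Set.mem_univ _) hs ht hst

lemma r1_nonneg (A : Matrix (Fin 3) (Fin 3) ℝ) (h : RankOneConvex3 (qA A)) (a b : Fin 3 → ℝ) :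
    0 ≤ qA A (vecMulVec a b) := by
  have h1 := (h 0 a b).2 (Set.mem_univ (-1 : ℝ)) (Set.mem_univ (1 : ℝ))
    (by norm_num : (0:ℝ) ≤ 1/2) (by norm_num : (0:ℝ) ≤ 1/2) (by norm_num)
  have hz : qA A (0 : Matrix (Fin 3) (Fin 3) ℝ) = 0 := by
    have : qA A ((0:ℝ) • vecMulVec a b) = 0 := by rw [qA_smul]; ring
    simpa using this
  have hneg : qA A (-(vecMulVec a b)) = qA A (vecMulVec a b) := by
    rw [← neg_one_smul ℝ, qA_smul]; ring
  simp only [smul_eq_mul] at h1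
  norm_num [hz, hneg] at h1
  linarith

lemma cross_lemma (x a : Fin 3 → ℝ) (hax : a ⬝ᵥ x = 0) :
    wv (vecMulVec a ![x 1 * a 2 - x 2 * a 1, x 2 * a 0 - x 0 * a 2, x 0 * a 1 - x 1 * a 0])
      = (-(a ⬝ᵥ a)/2) • x := by
  simp only [dotProduct, Fin.sum_univ_three] at hax ⊢
  funext i
  fin_cases i
  · simp [wv, vecMulVec_apply]; linear_combination (a 0)/2 * hax
  · simp [wv, vecMulVec_apply]; linear_combination (a 1)/2 * hax
  · simp [wv, vecMulVec_apply]; linear_combination (a 2)/2 * hax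

lemma r1_to_psd (A : Matrix (Fin 3) (Fin 3) ℝ) (h : RankOneConvex3 (qA A)) : PosSemidefM A := by
  intro x
  by_cases hx : x = 0
  · subst hx; simp
  · obtain ⟨i, hi⟩ : ∃ i, x i ≠ 0 := by simpa [funext_iff] using hx
    have step : ∀ a : Fin 3 → ℝ, a ⬝ᵥ x = 0 → 0 < a ⬝ᵥ a → 0 ≤ A.mulVec x ⬝ᵥ x := by
      intro a hax haa
      have h0 := r1_nonneg A h a
        ![x 1 * a 2 - x 2 * a 1, x 2 * a 0 - x 0 * a 2, x 0 * a 1 - x 1 * a 0]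
      rw [qA_eq, cross_lemma x a hax, Qf_smul] at h0
      have hc : (0:ℝ) < (-(a ⬝ᵥ a)/2)^2 := by nlinarith [mul_pos haa haa]
      show 0 ≤ Qf A x
      nlinarith [h0, hc]
    fin_cases i
    · exact step ![x 1, -(x 0), 0]
        (by simp [dotProduct, Fin.sum_univ_three]; ring)
        (by simp [dotProduct, Fin.sum_univ_three]; have hi' : x 0 ≠ 0 := hi; nlinarith [mul_self_pos.mpr hi', mul_self_nonneg (x 1)])
    · exact step ![0, x 2, -(x 1)]
        (by simp [dotProduct, Fin.sum_univ_three]; ring)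
        (by simp [dotProduct, Fin.sum_univ_three]; have hi' : x 1 ≠ 0 := hi; nlinarith [mul_self_pos.mpr hi', mul_self_nonneg (x 2)])
    · exact step ![-(x 2), 0, x 0]
        (by simp [dotProduct, Fin.sum_univ_three]; ring)
        (by simp [dotProduct, Fin.sum_univ_three]; have hi' : x 2 ≠ 0 := hi; nlinarith [mul_self_pos.mpr hi', mul_self_nonneg (x 0)])

/-- For `A ∈ S^{3×3}`, convexity of `q_A`, rank-one convexity of `q_A`, and positive
semi-definiteness of `A` are equivalent. -/
theorem qA_convexity_equivalences (A : Matrix (Fin 3) (Fin 3) ℝ) (hA : A.IsSymm) :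
    (ConvexOn ℝ Set.univ (qA A) ↔ RankOneConvex3 (qA A)) ∧
    (RankOneConvex3 (qA A) ↔ PosSemidefM A) := by
  exact ⟨⟨conv_to_r1 A, fun hr => psd_to_conv A (r1_to_psd A hr)⟩,
    ⟨r1_to_psd A, fun hp => conv_to_r1 A (psd_to_conv A hp)⟩⟩
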